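/- Let X be a countable regular space and κ an uncountable cardinal with uncountable cofinality. Then the set of points x ∈ X with π-character less than κ is closed in X. -/
import Mathlib

open Set Topology

/-- The π-character of a point: the least cardinality of a local π-base at the point. -/
noncomputable def piCharacter {X : Type*} [TopologicalSpace X] (x : X) : Cardinal :=
  sInf { c | ∃ B : Set (Set X), Cardinal.mk B = c ∧ (∀ U ∈ B, IsOpen U ∧ U.Nonempty) ∧
    ∀ V : Set X, IsOpen V → x ∈ V → ∃ U ∈ B, U ⊆ V }

lemma piCharacter_mem {X : Type*} [TopologicalSpace X] (x : X) :
    piCharacter x ∈ { c | ∃ B : Set (Set X), Cardinal.mk B = c ∧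
      (∀ U ∈ B, IsOpen U ∧ U.Nonempty) ∧
      ∀ V : Set X, IsOpen V → x ∈ V → ∃ U ∈ B, U ⊆ V } := by
  apply csInf_mem
  exact ⟨_, {U | IsOpen U ∧ U.Nonempty}, rfl, fun U hU => hU,
    fun V hV hxV => ⟨V, ⟨hV, ⟨x, hxV⟩⟩, subset_rfl⟩⟩

lemma piCharacter_le {X : Type*} [TopologicalSpace X] (x : X) (B : Set (Set X))
    (h1 : ∀ U ∈ B, IsOpen U ∧ U.Nonempty)
    (h2 : ∀ V : Set X, IsOpen V → x ∈ V → ∃ U ∈ B, U ⊆ V) :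
    piCharacter x ≤ Cardinal.mk B :=
  csInf_le' ⟨B, rfl, h1, h2⟩

/-- In a countable regular space, for an uncountable cardinal κ of uncountable
cofinality, the set of points of π-character less than κ is closed. -/
theorem statement14 {X : Type} [TopologicalSpace X] [T3Space X] [Countable X]
    (κ : Cardinal) (hκ : Cardinal.aleph0 < κ)
    (hcof : Cardinal.aleph0 < κ.ord.cof) :
    IsClosed {x : X | piCharacter x < κ} := by
  set A := {x : X | piCharacter x < κ} with hA
  refine isClosed_of_closure_subset ?_
  intro x hx
  -- choose π-bases for each point of A
  choose B hmk hopen hbase using fun a : A => piCharacter_mem (a : X)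
  set C : Set (Set X) := ⋃ a : A, B a with hC
  have hCκ : Cardinal.mk C < κ := by
    refine lt_of_le_of_lt (Cardinal.mk_iUnion_le B) ?_
    refine Cardinal.mul_lt_of_lt hκ.le ?_ ?_
    · exact lt_of_le_of_lt Cardinal.mk_le_aleph0 hκ
    · refine Ordinal.iSup_lt ?_ ?_
      · exact lt_of_le_of_lt Cardinal.mk_le_aleph0 hcof
      · intro a
        rw [hmk a]
        exact a.2
  have : piCharacter x ≤ Cardinal.mk C := by
    refine piCharacter_le x C ?_ ?_
    · intro U hU
      obtain ⟨a, ha⟩ := mem_iUnion.1 hU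
      exact hopen a U ha
    · intro V hV hxV
      obtain ⟨a, haV, haA⟩ := mem_closure_iff.1 hx V hV hxV
      obtain ⟨U, hU, hUV⟩ := hbase ⟨a, haA⟩ V hV haV
      exact ⟨U, mem_iUnion.2 ⟨⟨a, haA⟩, hU⟩, hUV⟩
  exact lt_of_le_of_lt this hCκ
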